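/- arXiv:1807.05507 — 2 statements merged into one kernel-verified Lean document; each statement's English description precedes it below -/
import Mathlib

section
/- With the setup of the full and reduced preconditioners K = V D V* (D = (I+Λ)^{-1}, Λ ≥ 0 with tail eigenvalues bounded by λ_{r+1}) and K̂ = I + V_r(D_r − I_r)V_r*, and the dimension-reduced MALA proposal v' = (I − ρ₁K)v − ρ₁K s(γ)∇Φ(v) + ρ₂ K^{1/2} ξ, the difference between the dimension-reduced proposal (using K̂) with γ_⊥ = 1 and the full proposal satisfies ‖v'_{DR} − v'_{full}‖ ≤ ρ₁ · λ_{r+1}/(λ_{r+1}+1) · (‖v‖ + ‖∇Φ(v)‖) + ρ₂ · λ_{r+1}/(λ_{r+1}+1+√(λ_{r+1}+1)) · ‖ξ‖. -/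
open ContinuousLinearMap

private lemma sq_le_lin {a b : ℝ} (ha : 0 ≤ a) (hb : 0 ≤ b) (h : a^2 ≤ b^2) : a ≤ b := by
  nlinarith [sq_nonneg (a - b), sq_nonneg (a + b)]

private lemma one_comp' {E F : Type*} [NormedAddCommGroup E] [InnerProductSpace ℝ E]
    [NormedAddCommGroup F] [InnerProductSpace ℝ F] (A : E →L[ℝ] F) :
    (1 : F →L[ℝ] F) ∘L A = A := by ext x; simp

private lemma comp_one' {E F : Type*} [NormedAddCommGroup E] [InnerProductSpace ℝ E]
    [NormedAddCommGroup F] [InnerProductSpace ℝ F] (A : E →L[ℝ] F) :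
    A ∘L (1 : E →L[ℝ] E) = A := by ext x; simp

private lemma cs_pos {E : Type*} [NormedAddCommGroup E] [InnerProductSpace ℝ E] [CompleteSpace E]
    (X : E →L[ℝ] E) (hsa : IsSelfAdjoint X) (hpos : ∀ x, 0 ≤ (inner ℝ (X x) x : ℝ)) (u w : E) :
    (inner ℝ (X u) w : ℝ)^2 ≤ (inner ℝ (X u) u : ℝ) * (inner ℝ (X w) w : ℝ) := by
  have hadj : ContinuousLinearMap.adjoint X = X := isSelfAdjoint_iff'.mp hsa
  have hwu : (inner ℝ (X w) u : ℝ) = (inner ℝ (X u) w : ℝ) := by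
    calc (inner ℝ (X w) u : ℝ) = (inner ℝ u (X w) : ℝ) := real_inner_comm _ _
    _ = (inner ℝ (ContinuousLinearMap.adjoint X u) w : ℝ) :=
        (ContinuousLinearMap.adjoint_inner_left X w u).symm
    _ = (inner ℝ (X u) w : ℝ) := by rw [hadj]
  have key : ∀ t : ℝ, 0 ≤ (inner ℝ (X w) w : ℝ) * (t * t) + (2 * (inner ℝ (X u) w : ℝ)) * t
      + (inner ℝ (X u) u : ℝ) := by
    intro t
    have h := hpos (u + t • w)
    simp only [map_add, map_smul, inner_add_left, inner_add_right, real_inner_smul_left,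
      real_inner_smul_right] at h
    rw [hwu] at h
    nlinarith [h]
  have hd := discrim_le_zero key
  rw [discrim] at hd
  nlinarith [hd]

private lemma gcs {E : Type*} [NormedAddCommGroup E] [InnerProductSpace ℝ E] [CompleteSpace E]
    (X : E →L[ℝ] E) (hsa : IsSelfAdjoint X) (hpos : ∀ x, 0 ≤ (inner ℝ (X x) x : ℝ))
    {C : ℝ} (hC : ‖X‖ ≤ C) (w : E) :
    ‖X w‖ ^ 2 ≤ C * (inner ℝ (X w) w : ℝ) := by
  by_cases h : X w = 0
  · simpa [h] using mul_nonneg (le_trans (norm_nonneg X) hC) (hpos w)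
  · have h1 := cs_pos X hsa hpos w (X w)
    have h2 : (inner ℝ (X (X w)) (X w) : ℝ) ≤ C * (‖X w‖ * ‖X w‖) := by
      calc (inner ℝ (X (X w)) (X w) : ℝ) ≤ ‖X (X w)‖ * ‖X w‖ := real_inner_le_norm _ _
      _ ≤ (‖X‖ * ‖X w‖) * ‖X w‖ := by
          have := X.le_opNorm (X w)
          nlinarith [norm_nonneg (X w)]
      _ ≤ C * (‖X w‖ * ‖X w‖) := by nlinarith [norm_nonneg (X w), norm_nonneg (X (X w))]
    have h3 : (inner ℝ (X w) (X w) : ℝ) = ‖X w‖^2 := real_inner_self_eq_norm_sq _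
    have h4 : 0 < ‖X w‖ := norm_pos_iff.mpr h
    nlinarith [mul_le_mul_of_nonneg_left h2 (hpos w), h1, h3, h4, mul_pos h4 h4, hpos w]

private lemma diff_eq {H : Type*} [NormedAddCommGroup H] [InnerProductSpace ℝ H] [CompleteSpace H]
    {E : Type*} [NormedAddCommGroup E] [InnerProductSpace ℝ E] [CompleteSpace E]
    {F : Type*} [NormedAddCommGroup F] [InnerProductSpace ℝ F] [CompleteSpace F]
    (Vr : E →L[ℝ] H) (Vp : F →L[ℝ] H)
    (hcompl : Vr ∘L adjoint Vr + Vp ∘L adjoint Vp = 1)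
    (Ar : E →L[ℝ] E) (Ap : F →L[ℝ] F) :
    (1 + Vr ∘L (Ar - 1) ∘L adjoint Vr) - (Vr ∘L Ar ∘L adjoint Vr + Vp ∘L Ap ∘L adjoint Vp)
      = Vp ∘L (1 - Ap) ∘L adjoint Vp := by
  have e1 : Vr ∘L (Ar - 1) ∘L adjoint Vr = Vr ∘L (Ar ∘L adjoint Vr) - Vr ∘L adjoint Vr := by
    rw [ContinuousLinearMap.sub_comp, ContinuousLinearMap.comp_sub, one_comp']
  have e2 : Vp ∘L (1 - Ap) ∘L adjoint Vp = Vp ∘L adjoint Vp - Vp ∘L (Ap ∘L adjoint Vp) := by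
    rw [ContinuousLinearMap.sub_comp, ContinuousLinearMap.comp_sub, one_comp']
  rw [e1, e2, ← hcompl]
  abel

set_option maxHeartbeats 1000000 in
/-- Bound on the difference between the dimension-reduced MALA proposal (with `γ_⊥ = 1`)
using `K̂ = I + Vr(Dr − I)Vr*` and the full proposal using `K = V (I+Λ)⁻¹ V*`:
`‖v'_DR − v'_full‖ ≤ ρ₁ λ/(λ+1) (‖v‖+‖∇Φ(v)‖) + ρ₂ λ/(λ+1+√(λ+1)) ‖ξ‖`,
where `λ = λ_{r+1}` bounds the tail eigenvalues (`‖Λ_⊥‖ ≤ λ`). -/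
theorem stmt10
    {H : Type*} [NormedAddCommGroup H] [InnerProductSpace ℝ H] [CompleteSpace H]
    {F : Type*} [NormedAddCommGroup F] [InnerProductSpace ℝ F] [CompleteSpace F]
    {r : ℕ}
    (Vr : EuclideanSpace ℝ (Fin r) →L[ℝ] H) (Vp : F →L[ℝ] H)
    (hVr : (adjoint Vr) ∘L Vr = 1) (hVp : (adjoint Vp) ∘L Vp = 1)
    (hcompl : Vr ∘L adjoint Vr + Vp ∘L adjoint Vp = 1)
    (horth : (adjoint Vr) ∘L Vp = 0)
    (Λr Dr Sr : EuclideanSpace ℝ (Fin r) →L[ℝ] EuclideanSpace ℝ (Fin r))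
    (Λp Dp Sp : F →L[ℝ] F)
    (lam : ℝ) (hlam : 0 ≤ lam)
    (hΛrsa : IsSelfAdjoint Λr) (hΛrpos : ∀ x, 0 ≤ (inner ℝ (Λr x) x : ℝ))
    (hΛpsa : IsSelfAdjoint Λp) (hΛppos : ∀ x, 0 ≤ (inner ℝ (Λp x) x : ℝ))
    (hΛpnorm : ‖Λp‖ ≤ lam)
    (hDr₁ : Dr ∘L (1 + Λr) = 1) (hDr₂ : (1 + Λr) ∘L Dr = 1)
    (hDp₁ : Dp ∘L (1 + Λp) = 1) (hDp₂ : (1 + Λp) ∘L Dp = 1)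
    (hSrsa : IsSelfAdjoint Sr) (hSrpos : ∀ x, 0 ≤ (inner ℝ (Sr x) x : ℝ))
    (hSr : Sr ∘L Sr = Dr)
    (hSpsa : IsSelfAdjoint Sp) (hSppos : ∀ x, 0 ≤ (inner ℝ (Sp x) x : ℝ))
    (hSp : Sp ∘L Sp = Dp)
    (ρ₁ ρ₂ : ℝ) (hρ₁ : 0 ≤ ρ₁) (hρ₂ : 0 ≤ ρ₂)
    (v g ξ : H)
    (K Khalf Khat Khathalf : H →L[ℝ] H)
    (hK : K = Vr ∘L Dr ∘L adjoint Vr + Vp ∘L Dp ∘L adjoint Vp)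
    (hKhalf : Khalf = Vr ∘L Sr ∘L adjoint Vr + Vp ∘L Sp ∘L adjoint Vp)
    (hKhat : Khat = 1 + Vr ∘L (Dr - 1) ∘L adjoint Vr)
    (hKhathalf : Khathalf = 1 + Vr ∘L (Sr - 1) ∘L adjoint Vr)
    (vfull vdr : H)
    (hvfull : vfull = v - ρ₁ • K v - ρ₁ • K g + ρ₂ • Khalf ξ)
    (hvdr : vdr = v - ρ₁ • Khat v - ρ₁ • Khat g + ρ₂ • Khathalf ξ) :
    ‖vdr - vfull‖ ≤
      ρ₁ * (lam / (lam + 1)) * (‖v‖ + ‖g‖) +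
        ρ₂ * (lam / (lam + 1 + Real.sqrt (lam + 1))) * ‖ξ‖ := by
  set s := Real.sqrt (lam + 1) with hs_def
  have hs2 : s * s = lam + 1 := Real.mul_self_sqrt (by linarith)
  have hsnn : 0 ≤ s := Real.sqrt_nonneg _
  have hs1 : 1 ≤ s := Real.le_sqrt_of_sq_le (by nlinarith)
  have hs0 : 0 < s := by linarith
  -- commutation of Sp with (1+Λp)
  have hSpDp : Sp ∘L Dp = Dp ∘L Sp := by
    rw [← hSp, ContinuousLinearMap.comp_assoc]
  have hcomm : Sp ∘L (1 + Λp) = (1 + Λp) ∘L Sp := by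
    have h1 : ((1 + Λp) ∘L Dp) ∘L (Sp ∘L (1 + Λp)) = Sp ∘L (1 + Λp) := by
      rw [hDp₂, one_comp']
    have h2 : ((1 + Λp) ∘L Dp) ∘L (Sp ∘L (1 + Λp)) = (1 + Λp) ∘L Sp := by
      calc ((1 + Λp) ∘L Dp) ∘L (Sp ∘L (1 + Λp))
          = (1 + Λp) ∘L (Dp ∘L (Sp ∘L (1 + Λp))) :=
            ContinuousLinearMap.comp_assoc (1 + Λp) Dp (Sp ∘L (1 + Λp))
      _ = (1 + Λp) ∘L ((Dp ∘L Sp) ∘L (1 + Λp)) := by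
            rw [ContinuousLinearMap.comp_assoc Dp Sp (1 + Λp)]
      _ = (1 + Λp) ∘L ((Sp ∘L Dp) ∘L (1 + Λp)) := by rw [hSpDp]
      _ = (1 + Λp) ∘L (Sp ∘L (Dp ∘L (1 + Λp))) := by
            rw [ContinuousLinearMap.comp_assoc Sp Dp (1 + Λp)]
      _ = (1 + Λp) ∘L Sp := by rw [hDp₁, comp_one']
    rw [← h1, h2]
  set X : F →L[ℝ] F := Sp ∘L (1 + Λp) with hX_def
  have hXSp : X ∘L Sp = 1 := by
    calc X ∘L Sp = Sp ∘L ((1 + Λp) ∘L Sp) := ContinuousLinearMap.comp_assoc _ _ _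
    _ = Sp ∘L (Sp ∘L (1 + Λp)) := by rw [← hcomm]
    _ = (Sp ∘L Sp) ∘L (1 + Λp) := (ContinuousLinearMap.comp_assoc _ _ _).symm
    _ = 1 := by rw [hSp, hDp₁]
  have hXX : X ∘L X = 1 + Λp := by
    calc X ∘L X = (X ∘L Sp) ∘L (1 + Λp) := (ContinuousLinearMap.comp_assoc _ _ _).symm
    _ = 1 + Λp := by rw [hXSp, one_comp']
  have hXsa : IsSelfAdjoint X := by
    rw [isSelfAdjoint_iff']
    rw [hX_def, ContinuousLinearMap.adjoint_comp]
    have h1 : ContinuousLinearMap.adjoint (1 + Λp) = 1 + Λp :=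
      isSelfAdjoint_iff'.mp ((IsSelfAdjoint.one (F →L[ℝ] F)).add hΛpsa)
    have h2 : ContinuousLinearMap.adjoint Sp = Sp := isSelfAdjoint_iff'.mp hSpsa
    rw [h1, h2, ← hcomm]
  have hXapp : ∀ u : F, X u = Sp ((1 + Λp) u) := fun u => rfl
  have hXpos : ∀ w : F, 0 ≤ (inner ℝ (X w) w : ℝ) := by
    intro w
    have hw : X (Sp w) = w := by
      have h := DFunLike.congr_fun hXSp w
      simpa using h
    have hXXu : X (X (Sp w)) = (1 + Λp) (Sp w) := by
      have h := DFunLike.congr_fun hXX (Sp w)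
      simpa using h
    calc (0:ℝ) ≤ inner ℝ (Sp ((1 + Λp) (Sp w))) ((1 + Λp) (Sp w)) := hSppos _
    _ = inner ℝ ((1 + Λp) (Sp w)) (Sp ((1 + Λp) (Sp w))) := real_inner_comm _ _
    _ = inner ℝ (X (X (Sp w))) (X (Sp w)) := by rw [hXXu, hXapp]
    _ = inner ℝ (X w) w := by rw [hw]
  have hXnorm : ‖X‖ ≤ s := by
    have h1 : ‖adjoint X ∘L X‖ = ‖X‖ * ‖X‖ := ContinuousLinearMap.norm_adjoint_comp_self X
    have h2 : adjoint X = X := isSelfAdjoint_iff'.mp hXsa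
    have h3 : ‖(1 : F →L[ℝ] F) + Λp‖ ≤ 1 + lam := by
      refine le_trans (norm_add_le _ _) ?_
      have h4 : ‖(1 : F →L[ℝ] F)‖ ≤ 1 := by
        rw [ContinuousLinearMap.one_def]; exact ContinuousLinearMap.norm_id_le
      linarith
    have h5 : ‖X‖ * ‖X‖ ≤ s * s := by
      rw [← h1, h2, hXX]; rw [hs2]; linarith
    exact sq_le_lin (norm_nonneg X) hsnn (by nlinarith)
  have keySp : ∀ z : F, ‖z‖^2 ≤ s * (inner ℝ (Sp z) z : ℝ) := by
    intro z
    have h := gcs X hXsa hXpos hXnorm (Sp z)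
    have hz : X (Sp z) = z := by
      have h' := DFunLike.congr_fun hXSp z
      simpa using h'
    rw [hz] at h
    calc ‖z‖^2 ≤ s * (inner ℝ z (Sp z) : ℝ) := h
    _ = s * (inner ℝ (Sp z) z : ℝ) := by rw [real_inner_comm]
  have keyDp : ∀ x : F, (lam + 1) * ‖((1 : F →L[ℝ] F) - Dp) x‖ ≤ lam * ‖x‖ := by
    intro x
    have hxy : x = Dp x + Λp (Dp x) := by
      have h := DFunLike.congr_fun hDp₂ x
      simp only [ContinuousLinearMap.comp_apply, ContinuousLinearMap.add_apply,
        ContinuousLinearMap.one_apply] at h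
      exact h.symm
    have h1d : ((1 : F →L[ℝ] F) - Dp) x = Λp (Dp x) := by
      simp only [ContinuousLinearMap.sub_apply, ContinuousLinearMap.one_apply]
      nth_rewrite 1 [hxy]
      abel
    have ha : ‖Λp (Dp x)‖ ≤ lam * ‖Dp x‖ := by
      refine le_trans (Λp.le_opNorm (Dp x)) ?_
      exact mul_le_mul_of_nonneg_right hΛpnorm (norm_nonneg _)
    have hg := gcs Λp hΛpsa hΛppos hΛpnorm (Dp x)
    have hx2 : ‖x‖^2 = ‖Dp x‖^2 + 2 * (inner ℝ (Λp (Dp x)) (Dp x) : ℝ) + ‖Λp (Dp x)‖^2 := by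
      nth_rewrite 1 [hxy]
      rw [norm_add_sq_real, real_inner_comm (Λp (Dp x)) (Dp x)]
    rw [h1d]
    apply sq_le_lin (mul_nonneg (by linarith) (norm_nonneg _)) (mul_nonneg hlam (norm_nonneg _))
    have hgoal : (lam * ‖x‖)^2
        = lam^2 * (‖Dp x‖^2 + 2 * (inner ℝ (Λp (Dp x)) (Dp x) : ℝ) + ‖Λp (Dp x)‖^2) := by
      rw [mul_pow, hx2]
    linarith [hgoal, mul_le_mul_of_nonneg_left hg hlam,
      mul_self_le_mul_self (norm_nonneg (Λp (Dp x))) ha]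
  have keySp2 : ∀ z : F, (s + 1) * ‖z‖ ≤ s * ‖z + Sp z‖ := by
    intro z
    have h1 := keySp z
    have h2 : (inner ℝ (Sp z) z : ℝ) ≤ ‖Sp z‖ * ‖z‖ := real_inner_le_norm _ _
    have hexp : ‖z + Sp z‖^2 = ‖z‖^2 + 2 * (inner ℝ (Sp z) z : ℝ) + ‖Sp z‖^2 := by
      rw [norm_add_sq_real, real_inner_comm (Sp z) z]
    apply sq_le_lin (mul_nonneg (by linarith) (norm_nonneg _)) (mul_nonneg hsnn (norm_nonneg _))
    have hexp2 : (s * ‖z + Sp z‖)^2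
        = s^2 * (‖z‖^2 + 2 * (inner ℝ (Sp z) z : ℝ) + ‖Sp z‖^2) := by
      rw [mul_pow, hexp]
    linarith [hexp2, h1, mul_le_mul_of_nonneg_left h1 hsnn, mul_le_mul_of_nonneg_left h2 hsnn,
      sq_nonneg (‖z‖ - s * ‖Sp z‖)]
  have keyS : ∀ x : F, (lam + 1 + s) * ‖((1 : F →L[ℝ] F) - Sp) x‖ ≤ lam * ‖x‖ := by
    intro x
    have hspx : Sp (Sp x) = Dp x := by
      have h := DFunLike.congr_fun hSp x
      simpa using h
    have hop : ((1 : F →L[ℝ] F) - Dp) x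
        = ((1 : F →L[ℝ] F) - Sp) x + Sp (((1 : F →L[ℝ] F) - Sp) x) := by
      simp only [ContinuousLinearMap.sub_apply, ContinuousLinearMap.one_apply, map_sub, hspx]
      abel
    have h2 := keySp2 (((1 : F →L[ℝ] F) - Sp) x)
    rw [← hop] at h2
    have h3 := keyDp x
    have e1 : s * s * ‖((1 : F →L[ℝ] F) - Sp) x‖ = (lam + 1) * ‖((1 : F →L[ℝ] F) - Sp) x‖ := by
      rw [hs2]
    have e2 : s * s * ‖((1 : F →L[ℝ] F) - Dp) x‖ = (lam + 1) * ‖((1 : F →L[ℝ] F) - Dp) x‖ := by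
      rw [hs2]
    linarith [mul_le_mul_of_nonneg_left h2 hsnn, h3, e1, e2]
  -- operator differences
  have hT1 : Khat - K = Vp ∘L (1 - Dp) ∘L adjoint Vp := by
    rw [hKhat, hK]; exact diff_eq Vr Vp hcompl Dr Dp
  have hT2 : Khathalf - Khalf = Vp ∘L (1 - Sp) ∘L adjoint Vp := by
    rw [hKhathalf, hKhalf]; exact diff_eq Vr Vp hcompl Sr Sp
  -- isometry facts
  have hVpcoiso : ∀ u : F, Vp ((adjoint Vp) (Vp u)) = Vp u := by
    intro u
    have h := DFunLike.congr_fun hVp u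
    simp only [ContinuousLinearMap.comp_apply, ContinuousLinearMap.one_apply] at h
    rw [h]
  have hVpiso : ∀ u : F, ‖Vp u‖ = ‖u‖ := by
    intro u
    have h := DFunLike.congr_fun hVp u
    simp only [ContinuousLinearMap.comp_apply, ContinuousLinearMap.one_apply] at h
    have hinner : (inner ℝ (Vp u) (Vp u) : ℝ) = inner ℝ u u := by
      rw [← ContinuousLinearMap.adjoint_inner_right Vp u (Vp u), h]
    have h1 : ‖Vp u‖^2 = ‖u‖^2 := by
      rw [← real_inner_self_eq_norm_sq, ← real_inner_self_eq_norm_sq, hinner]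
    exact le_antisymm (sq_le_lin (norm_nonneg _) (norm_nonneg _) (le_of_eq h1))
      (sq_le_lin (norm_nonneg _) (norm_nonneg _) (le_of_eq h1.symm))
  have hVpadj : ∀ x : H, ‖(adjoint Vp) x‖ ≤ ‖x‖ := by
    intro x
    by_cases h0 : (adjoint Vp) x = 0
    · simp [h0]
    · have h : ‖(adjoint Vp) x‖^2 = (inner ℝ x (Vp ((adjoint Vp) x)) : ℝ) := by
        rw [← real_inner_self_eq_norm_sq]
        exact ContinuousLinearMap.adjoint_inner_left Vp ((adjoint Vp) x) x
      have h2 : (inner ℝ x (Vp ((adjoint Vp) x)) : ℝ) ≤ ‖x‖ * ‖(adjoint Vp) x‖ := by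
        refine le_trans (real_inner_le_norm _ _) ?_
        rw [hVpiso]
      have h3 : 0 < ‖(adjoint Vp) x‖ := norm_pos_iff.mpr h0
      nlinarith [h, h2, h3]
  -- pointwise bounds
  have hbound1 : ∀ x : H, ‖(Khat - K) x‖ ≤ lam / (lam + 1) * ‖x‖ := by
    intro x
    rw [hT1]
    have e : (Vp ∘L (1 - Dp) ∘L adjoint Vp) x
        = Vp (((1 : F →L[ℝ] F) - Dp) ((adjoint Vp) x)) := rfl
    rw [e, hVpiso]
    rw [div_mul_eq_mul_div, le_div_iff₀ (by linarith : (0:ℝ) < lam + 1)]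
    have h := keyDp ((adjoint Vp) x)
    have h2 := hVpadj x
    linarith [h, mul_le_mul_of_nonneg_left h2 hlam]
  have hbound2 : ∀ x : H, ‖(Khathalf - Khalf) x‖ ≤ lam / (lam + 1 + s) * ‖x‖ := by
    intro x
    rw [hT2]
    have e : (Vp ∘L (1 - Sp) ∘L adjoint Vp) x
        = Vp (((1 : F →L[ℝ] F) - Sp) ((adjoint Vp) x)) := rfl
    rw [e, hVpiso]
    rw [div_mul_eq_mul_div, le_div_iff₀ (by linarith : (0:ℝ) < lam + 1 + s)]
    have h := keyS ((adjoint Vp) x)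
    have h2 := hVpadj x
    linarith [h, mul_le_mul_of_nonneg_left h2 hlam]
  -- vector identity
  have hdiff : vdr - vfull
      = ρ₂ • ((Khathalf - Khalf) ξ) - ρ₁ • ((Khat - K) v) - ρ₁ • ((Khat - K) g) := by
    rw [hvfull, hvdr]
    simp only [ContinuousLinearMap.sub_apply]
    module
  rw [hdiff]
  have t1 := hbound1 v
  have t2 := hbound1 g
  have t3 := hbound2 ξ
  have hc1 : 0 ≤ lam / (lam + 1) := div_nonneg hlam (by linarith)
  have hc2 : 0 ≤ lam / (lam + 1 + s) := div_nonneg hlam (by linarith)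
  have htri : ‖ρ₂ • ((Khathalf - Khalf) ξ) - ρ₁ • ((Khat - K) v) - ρ₁ • ((Khat - K) g)‖
      ≤ ρ₂ * ‖(Khathalf - Khalf) ξ‖ + ρ₁ * ‖(Khat - K) v‖ + ρ₁ * ‖(Khat - K) g‖ := by
    calc ‖ρ₂ • ((Khathalf - Khalf) ξ) - ρ₁ • ((Khat - K) v) - ρ₁ • ((Khat - K) g)‖
        ≤ ‖ρ₂ • ((Khathalf - Khalf) ξ) - ρ₁ • ((Khat - K) v)‖ + ‖ρ₁ • ((Khat - K) g)‖ :=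
          norm_sub_le _ _
    _ ≤ ‖ρ₂ • ((Khathalf - Khalf) ξ)‖ + ‖ρ₁ • ((Khat - K) v)‖ + ‖ρ₁ • ((Khat - K) g)‖ := by
          have := norm_sub_le (ρ₂ • ((Khathalf - Khalf) ξ)) (ρ₁ • ((Khat - K) v))
          linarith
    _ = ρ₂ * ‖(Khathalf - Khalf) ξ‖ + ρ₁ * ‖(Khat - K) v‖ + ρ₁ * ‖(Khat - K) g‖ := by
          rw [norm_smul, norm_smul, norm_smul, Real.norm_eq_abs, Real.norm_eq_abs,
            abs_of_nonneg hρ₁, abs_of_nonneg hρ₂]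
  refine le_trans htri ?_
  linarith [mul_le_mul_of_nonneg_left t1 hρ₁, mul_le_mul_of_nonneg_left t2 hρ₁,
    mul_le_mul_of_nonneg_left t3 hρ₂]
end

section
/- With the same setup, if γ_⊥ = 0 (i.e., s(γ) = V_r V_r* in the reduced proposal while the full proposal uses the full gradient), the proposal difference satisfies ‖v'_{DR} − v'_{full}‖ ≤ ρ₁ (λ_{r+1}/(λ_{r+1}+1) ‖v‖ + ‖∇Φ(v)‖) + ρ₂ · λ_{r+1}/(λ_{r+1}+1+√(λ_{r+1}+1)) ‖ξ‖. -/
open ContinuousLinearMap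
open ContinuousLinearMap
section
variable {E : Type*} [NormedAddCommGroup E] [InnerProductSpace ℝ E] [CompleteSpace E]

lemma my_gcs (T : E →L[ℝ] E) (hsa : IsSelfAdjoint T)
    (hpos : ∀ x, 0 ≤ (inner ℝ (T x) x : ℝ)) (x y : E) :
    (inner ℝ (T x) y : ℝ)^2 ≤ (inner ℝ (T x) x : ℝ) * (inner ℝ (T y) y : ℝ) := by
  have hadj : ∀ a b : E, (inner ℝ (T a) b : ℝ) = inner ℝ a (T b) := fun a b => by
    conv_lhs => rw [← hsa.adjoint_eq]
    exact adjoint_inner_left T b a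
  have key : ∀ t : ℝ, 0 ≤ (inner ℝ (T y) y : ℝ) * (t*t) + (2 * (inner ℝ (T x) y : ℝ)) * t
      + (inner ℝ (T x) x : ℝ) := by
    intro t
    have h0 := hpos (x + t • y)
    have hyx : (inner ℝ (T y) x : ℝ) = inner ℝ (T x) y := by
      rw [hadj y x, real_inner_comm]
    simp only [map_add, map_smul, inner_add_left, inner_add_right, inner_smul_left,
      inner_smul_right, RCLike.conj_to_real] at h0
    rw [hyx] at h0
    nlinarith [h0]
  have := discrim_le_zero key
  rw [discrim] at this
  nlinarith [this]

lemma my_sqnorm (T : E →L[ℝ] E) (hsa : IsSelfAdjoint T)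
    (hpos : ∀ x, 0 ≤ (inner ℝ (T x) x : ℝ)) (x : E) :
    ‖T x‖^2 ≤ ‖T‖ * (inner ℝ (T x) x : ℝ) := by
  have h := my_gcs T hsa hpos x (T x)
  have h2 : (inner ℝ (T (T x)) (T x) : ℝ) ≤ ‖T‖ * ‖T x‖^2 := by
    calc (inner ℝ (T (T x)) (T x) : ℝ) ≤ ‖T (T x)‖ * ‖T x‖ := real_inner_le_norm _ _
    _ ≤ (‖T‖ * ‖T x‖) * ‖T x‖ := by
        have := T.le_opNorm (T x); nlinarith [norm_nonneg (T x)]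
    _ = ‖T‖ * ‖T x‖^2 := by ring
  have hx : (inner ℝ (T x) (T x) : ℝ) = ‖T x‖^2 := real_inner_self_eq_norm_sq _
  rw [hx] at h
  rcases eq_or_lt_of_le (norm_nonneg (T x)) with h0 | h0
  · have hz : ‖T x‖ = 0 := h0.symm
    rw [hz]
    norm_num
    exact mul_nonneg T.opNorm_nonneg (hpos x)
  · have h6 := mul_le_mul_of_nonneg_left h2 (hpos x)
    nlinarith [h, h6, pow_pos h0 2]

lemma my_opnorm_le (T : E →L[ℝ] E) (hsa : IsSelfAdjoint T)
    (hpos : ∀ x, 0 ≤ (inner ℝ (T x) x : ℝ)) {C : ℝ} (hC0 : 0 ≤ C)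
    (hC : ∀ x, (inner ℝ (T x) x : ℝ) ≤ C * ‖x‖^2) : ‖T‖ ≤ C := by
  have hb : ‖T‖ ≤ Real.sqrt (‖T‖ * C) := by
    apply T.opNorm_le_bound (Real.sqrt_nonneg _)
    intro x
    have h1 := my_sqnorm T hsa hpos x
    have h2 := hC x
    have h3 : ‖T x‖^2 ≤ (‖T‖ * C) * ‖x‖^2 := by nlinarith [norm_nonneg (T x), T.opNorm_nonneg]
    have h4 := Real.sqrt_le_sqrt h3
    rwa [Real.sqrt_sq (norm_nonneg _),
      Real.sqrt_mul (mul_nonneg T.opNorm_nonneg hC0),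
      Real.sqrt_sq (norm_nonneg x)] at h4
  have h4 : ‖T‖^2 ≤ ‖T‖ * C := by
    have h5 := Real.sq_sqrt (mul_nonneg T.opNorm_nonneg hC0)
    nlinarith [Real.sqrt_nonneg (‖T‖*C), T.opNorm_nonneg]
  rcases eq_or_lt_of_le T.opNorm_nonneg with h0 | h0
  · linarith [h0.symm]
  · nlinarith
end

section MyTail
variable {E : Type*} [NormedAddCommGroup E] [InnerProductSpace ℝ E] [CompleteSpace E]

set_option maxHeartbeats 1000000 in
lemma my_tail (Λp Dp Sp : E →L[ℝ] E) (lam : ℝ) (hlam : 0 ≤ lam)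
    (hΛpsa : IsSelfAdjoint Λp) (hΛppos : ∀ x, 0 ≤ (inner ℝ (Λp x) x : ℝ))
    (hΛpnorm : ‖Λp‖ ≤ lam)
    (hDp₂ : (1 + Λp) ∘L Dp = 1)
    (hSpsa : IsSelfAdjoint Sp) (hSppos : ∀ x, 0 ≤ (inner ℝ (Sp x) x : ℝ))
    (hSp : Sp ∘L Sp = Dp) :
    ‖Dp‖ ≤ 1 ∧ ‖(1 - Dp : E →L[ℝ] E)‖ ≤ lam / (lam + 1) ∧
      ‖(1 - Sp : E →L[ℝ] E)‖ ≤ lam / (lam + 1 + Real.sqrt (lam + 1)) := by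
  have hlam1 : (0:ℝ) < lam + 1 := by linarith
  have hΛpT : IsSelfAdjoint ((1 + Λp) : E →L[ℝ] E) :=
    (IsSelfAdjoint.one (E →L[ℝ] E)).add hΛpsa
  have hDp2 : ∀ x, (1 + Λp) (Dp x) = x := fun x => by
    have := ContinuousLinearMap.ext_iff.mp hDp₂ x; simpa using this
  have hDpsa : IsSelfAdjoint Dp := by
    rw [isSelfAdjoint_iff']
    have h1 : adjoint Dp ∘L (1 + Λp) = 1 := by
      rw [← hΛpT.adjoint_eq, ← adjoint_comp, hDp₂]
      exact (IsSelfAdjoint.one (E →L[ℝ] E)).adjoint_eq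
    ext x
    conv_lhs => rw [show x = (1 + Λp) (Dp x) from (hDp2 x).symm]
    have := ContinuousLinearMap.ext_iff.mp h1 (Dp x)
    simpa using this
  have hTpos : ∀ y, 0 ≤ (inner ℝ (((1 + Λp) : E →L[ℝ] E) y) y : ℝ) := fun y => by
    simp only [add_apply, one_apply_eq_self, inner_add_left]
    have := hΛppos y
    have := real_inner_self_nonneg (x := y)
    linarith
  have hTnorm : ‖((1 + Λp) : E →L[ℝ] E)‖ ≤ 1 + lam := by
    calc ‖((1 + Λp) : E →L[ℝ] E)‖ ≤ ‖(1 : E →L[ℝ] E)‖ + ‖Λp‖ := norm_add_le _ _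
      _ ≤ 1 + lam := add_le_add norm_id_le hΛpnorm
  have hDppos : ∀ x, 0 ≤ (inner ℝ (Dp x) x : ℝ) := fun x => by
    calc (0:ℝ) ≤ inner ℝ (((1 + Λp) : E →L[ℝ] E) (Dp x)) (Dp x) := hTpos (Dp x)
      _ = inner ℝ (Dp x) x := by rw [hDp2, real_inner_comm]
  have hDplow : ∀ x, ‖x‖^2 ≤ (lam + 1) * (inner ℝ (Dp x) x : ℝ) := fun x => by
    have h1 := my_sqnorm ((1 + Λp) : E →L[ℝ] E) hΛpT hTpos (Dp x)
    rw [hDp2] at h1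
    have h2 : (inner ℝ x (Dp x) : ℝ) = inner ℝ (Dp x) x := real_inner_comm _ _
    rw [h2] at h1
    have := hDppos x
    nlinarith [hTnorm]
  have hDpcontr : ∀ x, ‖Dp x‖ ≤ ‖x‖ := fun x => by
    have h1 : ‖Dp x‖^2 ≤ (inner ℝ (((1 + Λp) : E →L[ℝ] E) (Dp x)) (Dp x) : ℝ) := by
      simp only [add_apply, one_apply_eq_self, inner_add_left]
      have := hΛppos (Dp x)
      rw [real_inner_self_eq_norm_sq]
      linarith
    rw [hDp2] at h1
    have h2 : (inner ℝ x (Dp x) : ℝ) ≤ ‖x‖ * ‖Dp x‖ := real_inner_le_norm _ _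
    rcases eq_or_lt_of_le (norm_nonneg (Dp x)) with h0 | h0
    · rw [← h0]; exact norm_nonneg x
    · nlinarith
  have hDpup : ∀ x, (inner ℝ (Dp x) x : ℝ) ≤ ‖x‖^2 := fun x => by
    calc (inner ℝ (Dp x) x : ℝ) ≤ ‖Dp x‖ * ‖x‖ := real_inner_le_norm _ _
      _ ≤ ‖x‖ * ‖x‖ := mul_le_mul_of_nonneg_right (hDpcontr x) (norm_nonneg x)
      _ = ‖x‖^2 := by ring
  have hDpnorm : ‖Dp‖ ≤ 1 := by
    apply my_opnorm_le Dp hDpsa hDppos zero_le_one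
    intro x; rw [one_mul]; exact hDpup x
  have hB1sa : IsSelfAdjoint ((1 - Dp) : E →L[ℝ] E) := (IsSelfAdjoint.one (E →L[ℝ] E)).sub hDpsa
  have hB1pos : ∀ x, 0 ≤ (inner ℝ (((1 - Dp) : E →L[ℝ] E) x) x : ℝ) := fun x => by
    simp only [sub_apply, one_apply_eq_self, inner_sub_left]
    rw [real_inner_self_eq_norm_sq]
    linarith [hDpup x]
  have hd0 : 0 ≤ lam / (lam + 1) := div_nonneg hlam (le_of_lt hlam1)
  have hB1norm : ‖(1 - Dp : E →L[ℝ] E)‖ ≤ lam / (lam + 1) := by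
    apply my_opnorm_le _ hB1sa hB1pos hd0
    intro x
    simp only [sub_apply, one_apply_eq_self, inner_sub_left]
    rw [real_inner_self_eq_norm_sq]
    have h1 := hDplow x
    have h2 : lam / (lam + 1) * ‖x‖^2 = ‖x‖^2 - ‖x‖^2 / (lam + 1) := by
      field_simp; ring
    rw [h2]
    have h3 : ‖x‖^2 / (lam + 1) ≤ inner ℝ (Dp x) x := by
      rw [div_le_iff₀ hlam1]
      nlinarith [hDppos x]
    linarith
  have hSpap : ∀ x, Sp (Sp x) = Dp x := fun x => by
    have := ContinuousLinearMap.ext_iff.mp hSp x; simpa using this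
  have hSpcontr : ∀ x, ‖Sp x‖ ≤ ‖x‖ := fun x => by
    have h1 : ‖Sp x‖^2 = (inner ℝ (Dp x) x : ℝ) := by
      rw [← real_inner_self_eq_norm_sq]
      calc (inner ℝ (Sp x) (Sp x) : ℝ) = inner ℝ (adjoint Sp (Sp x)) x := by
            rw [adjoint_inner_left]
        _ = inner ℝ (Dp x) x := by rw [hSpsa.adjoint_eq, hSpap]
    have h2 : ‖Sp x‖^2 ≤ ‖x‖^2 := by rw [h1]; exact hDpup x
    nlinarith [norm_nonneg (Sp x), norm_nonneg x]
  have hSpup : ∀ x, (inner ℝ (Sp x) x : ℝ) ≤ ‖x‖^2 := fun x => by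
    calc (inner ℝ (Sp x) x : ℝ) ≤ ‖Sp x‖ * ‖x‖ := real_inner_le_norm _ _
      _ ≤ ‖x‖ * ‖x‖ := mul_le_mul_of_nonneg_right (hSpcontr x) (norm_nonneg x)
      _ = ‖x‖^2 := by ring
  have hBsa : IsSelfAdjoint ((1 - Sp) : E →L[ℝ] E) := (IsSelfAdjoint.one (E →L[ℝ] E)).sub hSpsa
  have hBpos : ∀ x, 0 ≤ (inner ℝ (((1 - Sp) : E →L[ℝ] E) x) x : ℝ) := fun x => by
    simp only [sub_apply, one_apply_eq_self, inner_sub_left]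
    rw [real_inner_self_eq_norm_sq]
    linarith [hSpup x]
  have hBnorm1 : ‖(1 - Sp : E →L[ℝ] E)‖ ≤ 1 := by
    apply my_opnorm_le _ hBsa hBpos zero_le_one
    intro x
    simp only [sub_apply, one_apply_eq_self, inner_sub_left]
    rw [real_inner_self_eq_norm_sq, one_mul]
    linarith [hSppos x]
  have hid : (2:ℝ) • ((1 - Sp) : E →L[ℝ] E) = (1 - Dp) + (1 - Sp) ∘L (1 - Sp) := by
    ext x
    simp only [coe_smul', Pi.smul_apply, comp_apply, sub_apply, one_apply_eq_self, map_sub, hSpap,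
      add_apply]
    module
  have hquad : 2 * ‖(1 - Sp : E →L[ℝ] E)‖ ≤ lam / (lam + 1) +
      ‖(1 - Sp : E →L[ℝ] E)‖ * ‖(1 - Sp : E →L[ℝ] E)‖ := by
    have h1 : ‖(2:ℝ) • ((1 - Sp) : E →L[ℝ] E)‖ = 2 * ‖(1 - Sp : E →L[ℝ] E)‖ := by
      have := norm_smul (2:ℝ) ((1 - Sp) : E →L[ℝ] E)
      simpa using this
    calc 2 * ‖(1 - Sp : E →L[ℝ] E)‖ = ‖(1 - Dp : E →L[ℝ] E) + (1 - Sp) ∘L (1 - Sp)‖ := by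
          rw [← h1, hid]
      _ ≤ ‖(1 - Dp : E →L[ℝ] E)‖ + ‖((1 - Sp) ∘L (1 - Sp) : E →L[ℝ] E)‖ := norm_add_le _ _
      _ ≤ lam / (lam + 1) + ‖(1 - Sp : E →L[ℝ] E)‖ * ‖(1 - Sp : E →L[ℝ] E)‖ :=
          add_le_add hB1norm (opNorm_comp_le _ _)
  set μ : ℝ := Real.sqrt (lam + 1) with hμdef
  have hμ : μ * μ = lam + 1 := Real.mul_self_sqrt (le_of_lt hlam1)
  have hμ1 : 1 ≤ μ := by
    nlinarith [hμ, Real.sqrt_nonneg (lam + 1)]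
  set b : ℝ := ‖(1 - Sp : E →L[ℝ] E)‖ with hbdef
  have hb0 : 0 ≤ b := norm_nonneg _
  have hstep : 1 ≤ μ * (1 - b) := by
    have hsq : 1 ≤ (μ * (1 - b))^2 := by
      have h1 : 1 / (lam + 1) ≤ (1 - b)^2 := by
        have : b * b ≥ 2 * b - lam / (lam + 1) := by linarith [hquad]
        rw [div_le_iff₀ hlam1]
        have hd : lam / (lam + 1) * (lam + 1) = lam := by field_simp
        nlinarith [this]
      have h2 : (lam + 1) * (1 / (lam + 1)) = 1 := by field_simp
      have h3 := mul_le_mul_of_nonneg_left h1 (le_of_lt hlam1)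
      nlinarith [h3, h2, hμ]
    nlinarith [mul_nonneg (le_trans zero_le_one hμ1 : (0:ℝ) ≤ μ)
      (by linarith [hBnorm1] : (0:ℝ) ≤ 1 - b), hsq]
  have hc2pos : (0:ℝ) < lam + 1 + μ := by linarith
  have hBnorm : b ≤ lam / (lam + 1 + μ) := by
    rw [le_div_iff₀ hc2pos]
    nlinarith [hstep, hμ, hμ1, hb0]
  exact ⟨hDpnorm, hB1norm, hBnorm⟩
end MyTail

set_option maxHeartbeats 2000000 in
/-- Bound on the difference between the dimension-reduced MALA proposal (with `γ_⊥ = 0`, i.e. `s(γ) = Vr Vr*`)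
using `K̂ = I + Vr(Dr − I)Vr*` and the full proposal using `K = V (I+Λ)⁻¹ V*`:
`‖v'_DR − v'_full‖ ≤ ρ₁ λ/(λ+1) (λ/(λ+1)‖v‖ + ‖∇Φ(v)‖) + ρ₂ λ/(λ+1+√(λ+1)) ‖ξ‖`,
where `λ = λ_{r+1}` bounds the tail eigenvalues (`‖Λ_⊥‖ ≤ λ`). -/
theorem stmt11
    {H : Type*} [NormedAddCommGroup H] [InnerProductSpace ℝ H] [CompleteSpace H]
    {F : Type*} [NormedAddCommGroup F] [InnerProductSpace ℝ F] [CompleteSpace F]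
    {r : ℕ}
    (Vr : EuclideanSpace ℝ (Fin r) →L[ℝ] H) (Vp : F →L[ℝ] H)
    (hVr : (adjoint Vr) ∘L Vr = 1) (hVp : (adjoint Vp) ∘L Vp = 1)
    (hcompl : Vr ∘L adjoint Vr + Vp ∘L adjoint Vp = 1)
    (horth : (adjoint Vr) ∘L Vp = 0)
    (Λr Dr Sr : EuclideanSpace ℝ (Fin r) →L[ℝ] EuclideanSpace ℝ (Fin r))
    (Λp Dp Sp : F →L[ℝ] F)
    (lam : ℝ) (hlam : 0 ≤ lam)
    (hΛrsa : IsSelfAdjoint Λr) (hΛrpos : ∀ x, 0 ≤ (inner ℝ (Λr x) x : ℝ))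
    (hΛpsa : IsSelfAdjoint Λp) (hΛppos : ∀ x, 0 ≤ (inner ℝ (Λp x) x : ℝ))
    (hΛpnorm : ‖Λp‖ ≤ lam)
    (hDr₁ : Dr ∘L (1 + Λr) = 1) (hDr₂ : (1 + Λr) ∘L Dr = 1)
    (hDp₁ : Dp ∘L (1 + Λp) = 1) (hDp₂ : (1 + Λp) ∘L Dp = 1)
    (hSrsa : IsSelfAdjoint Sr) (hSrpos : ∀ x, 0 ≤ (inner ℝ (Sr x) x : ℝ))
    (hSr : Sr ∘L Sr = Dr)
    (hSpsa : IsSelfAdjoint Sp) (hSppos : ∀ x, 0 ≤ (inner ℝ (Sp x) x : ℝ))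
    (hSp : Sp ∘L Sp = Dp)
    (ρ₁ ρ₂ : ℝ) (hρ₁ : 0 ≤ ρ₁) (hρ₂ : 0 ≤ ρ₂)
    (v g ξ : H)
    (K Khalf Khat Khathalf : H →L[ℝ] H)
    (hK : K = Vr ∘L Dr ∘L adjoint Vr + Vp ∘L Dp ∘L adjoint Vp)
    (hKhalf : Khalf = Vr ∘L Sr ∘L adjoint Vr + Vp ∘L Sp ∘L adjoint Vp)
    (hKhat : Khat = 1 + Vr ∘L (Dr - 1) ∘L adjoint Vr)
    (hKhathalf : Khathalf = 1 + Vr ∘L (Sr - 1) ∘L adjoint Vr)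
    (vfull vdr : H)
    (hvfull : vfull = v - ρ₁ • K v - ρ₁ • K g + ρ₂ • Khalf ξ)
    (hvdr : vdr = v - ρ₁ • Khat v - ρ₁ • Khat ((Vr ∘L adjoint Vr) g) + ρ₂ • Khathalf ξ) :
    ‖vdr - vfull‖ ≤
      ρ₁ * ((lam / (lam + 1)) * ‖v‖ + ‖g‖) +
        ρ₂ * (lam / (lam + 1 + Real.sqrt (lam + 1))) * ‖ξ‖ := by
  have hlam1 : (0:ℝ) < lam + 1 := by linarith
  -- pointwise versions of structural hypotheses
  have hr : ∀ w, adjoint Vr (Vr w) = w := fun w => by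
    have := ContinuousLinearMap.ext_iff.mp hVr w; simpa using this
  have hp : ∀ w, adjoint Vp (Vp w) = w := fun w => by
    have := ContinuousLinearMap.ext_iff.mp hVp w; simpa using this
  have hcp : ∀ z : H, Vp (adjoint Vp z) = z - Vr (adjoint Vr z) := fun z => by
    have := ContinuousLinearMap.ext_iff.mp hcompl z
    simp only [add_apply, comp_apply, one_apply_eq_self] at this
    linear_combination (norm := abel) this
  have hVpn : ∀ x : F, ‖Vp x‖ = ‖x‖ := fun x => by
    have h1 : ‖Vp x‖^2 = ‖x‖^2 := by
      rw [← real_inner_self_eq_norm_sq, ← real_inner_self_eq_norm_sq]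
      calc (inner ℝ (Vp x) (Vp x) : ℝ) = inner ℝ (adjoint Vp (Vp x)) x := by
            rw [adjoint_inner_left]
        _ = inner ℝ x x := by rw [hp]
    have h2 := congrArg Real.sqrt h1
    rwa [Real.sqrt_sq (norm_nonneg _), Real.sqrt_sq (norm_nonneg _)] at h2
  have hVpan : ∀ z : H, ‖adjoint Vp z‖ ≤ ‖z‖ := fun z => by
    have h1 : ‖adjoint Vp z‖^2 = (inner ℝ z (Vp (adjoint Vp z)) : ℝ) := by
      rw [← real_inner_self_eq_norm_sq]
      exact adjoint_inner_left Vp (adjoint Vp z) z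
    have h2 : (inner ℝ z (Vp (adjoint Vp z)) : ℝ) ≤ ‖z‖ * ‖adjoint Vp z‖ := by
      calc (inner ℝ z (Vp (adjoint Vp z)) : ℝ) ≤ ‖z‖ * ‖Vp (adjoint Vp z)‖ :=
            real_inner_le_norm _ _
        _ = ‖z‖ * ‖adjoint Vp z‖ := by rw [hVpn]
    rcases eq_or_lt_of_le (norm_nonneg (adjoint Vp z)) with h0 | h0
    · rw [← h0]; exact norm_nonneg z
    · nlinarith
  obtain ⟨hDpnorm, hB1norm, hBnorm⟩ := my_tail Λp Dp Sp lam hlam hΛpsa hΛppos hΛpnorm hDp₂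
    hSpsa hSppos hSp
  set μ : ℝ := Real.sqrt (lam + 1) with hμdef
  have hc2pos : (0:ℝ) < lam + 1 + μ := by positivity
  have hd0 : 0 ≤ lam / (lam + 1) := div_nonneg hlam (le_of_lt hlam1)
  have hc20 : 0 ≤ lam / (lam + 1 + μ) := div_nonneg hlam (le_of_lt hc2pos)
  -- the key vector identity
  have keyid : vdr - vfull = (-ρ₁) • (Vp ((1 - Dp) (adjoint Vp v)))
      + ρ₁ • (Vp (Dp (adjoint Vp g))) + ρ₂ • (Vp ((1 - Sp) (adjoint Vp ξ))) := by
    subst hvdr hvfull hK hKhalf hKhat hKhathalf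
    have e1 := hcp v
    have e3 := hcp ξ
    simp only [add_apply, comp_apply, sub_apply, one_apply_eq_self, map_sub, map_add, hr]
    rw [e1, e3]
    module
  rw [keyid]
  have t1 : ‖Vp ((1 - Dp) (adjoint Vp v))‖ ≤ (lam / (lam + 1)) * ‖v‖ := by
    rw [hVpn]
    calc ‖(1 - Dp : F →L[ℝ] F) (adjoint Vp v)‖ ≤ ‖(1 - Dp : F →L[ℝ] F)‖ * ‖adjoint Vp v‖ :=
          le_opNorm _ _
      _ ≤ (lam / (lam + 1)) * ‖v‖ :=
          mul_le_mul hB1norm (hVpan v) (norm_nonneg _) hd0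
  have t2 : ‖Vp (Dp (adjoint Vp g))‖ ≤ ‖g‖ := by
    rw [hVpn]
    calc ‖Dp (adjoint Vp g)‖ ≤ ‖Dp‖ * ‖adjoint Vp g‖ := le_opNorm _ _
      _ ≤ 1 * ‖g‖ := mul_le_mul hDpnorm (hVpan g) (norm_nonneg _) zero_le_one
      _ = ‖g‖ := one_mul _
  have t3 : ‖Vp ((1 - Sp) (adjoint Vp ξ))‖ ≤ (lam / (lam + 1 + μ)) * ‖ξ‖ := by
    rw [hVpn]
    calc ‖(1 - Sp : F →L[ℝ] F) (adjoint Vp ξ)‖ ≤ ‖(1 - Sp : F →L[ℝ] F)‖ * ‖adjoint Vp ξ‖ := le_opNorm _ _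
      _ ≤ (lam / (lam + 1 + μ)) * ‖ξ‖ :=
          mul_le_mul hBnorm (hVpan ξ) (norm_nonneg _) hc20
  calc ‖(-ρ₁) • (Vp ((1 - Dp) (adjoint Vp v)))
      + ρ₁ • (Vp (Dp (adjoint Vp g))) + ρ₂ • (Vp ((1 - Sp) (adjoint Vp ξ)))‖
      ≤ ‖(-ρ₁) • (Vp ((1 - Dp) (adjoint Vp v)))‖ + ‖ρ₁ • (Vp (Dp (adjoint Vp g)))‖
        + ‖ρ₂ • (Vp ((1 - Sp) (adjoint Vp ξ)))‖ := norm_add₃_le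
    _ = ρ₁ * ‖Vp ((1 - Dp) (adjoint Vp v))‖ + ρ₁ * ‖Vp (Dp (adjoint Vp g))‖
        + ρ₂ * ‖Vp ((1 - Sp) (adjoint Vp ξ))‖ := by
          rw [norm_smul, norm_smul, norm_smul, Real.norm_eq_abs, Real.norm_eq_abs,
            Real.norm_eq_abs, abs_neg, abs_of_nonneg hρ₁, abs_of_nonneg hρ₂]
    _ ≤ ρ₁ * ((lam / (lam + 1)) * ‖v‖) + ρ₁ * ‖g‖ + ρ₂ * ((lam / (lam + 1 + μ)) * ‖ξ‖) := by
          gcongr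
    _ = ρ₁ * ((lam / (lam + 1)) * ‖v‖ + ‖g‖) + ρ₂ * (lam / (lam + 1 + μ)) * ‖ξ‖ := by ring
end
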